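/- arXiv:2204.02778 — 2 statements merged into one kernel-verified Lean document; each statement's English description precedes it below -/
import Mathlib

section
/- If (X, A) is an NDR-pair over B represented by (u, h), and C → B is any space over B, then (X ×_B C, A ×_B C) is an NDR-pair over B. -/
open unitInterval

/-- A pair `A ⊆ X` of spaces over `B` (with structure map `πX : X → B`) is an *NDR-pair over
`B`* if there are a map `u : X → [0,1] × B` over `B` and a homotopy `h : X × [0,1] → X` over
`B` such that `A = u⁻¹({0} × B)`, `h(−,0) = id_X`, `h` is stationary on `A`, and
`h(x,1) ∈ A` whenever `u(x) ∈ [0,1) × B`. -/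
def IsNDRPairOver {X B : Type} [TopologicalSpace X] [TopologicalSpace B]
    (πX : C(X, B)) (A : Set X) : Prop :=
  ∃ (u : C(X, I × B)) (h : C(X × I, X)),
    (∀ x, (u x).2 = πX x) ∧
    (∀ x t, πX (h (x, t)) = πX x) ∧
    (A = {x | (u x).1 = 0}) ∧
    (∀ x, h (x, 0) = x) ∧
    (∀ a ∈ A, ∀ t, h (a, t) = a) ∧
    (∀ x, (u x).1 < 1 → h (x, 1) ∈ A)

/-- If `(X, A)` is an NDR-pair over `B`, and `C → B` is any space over `B`,
then `(X ×_B C, A ×_B C)` is an NDR-pair over `B`, where the fibred products are taken along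
the structure maps and the structure map of `X ×_B C` is induced by that of `X`. -/
theorem stmt_12 {X B C : Type} [TopologicalSpace X] [TopologicalSpace B] [TopologicalSpace C]
    (πX : C(X, B)) (A : Set X) (γ : C(C, B))
    (hA : IsNDRPairOver πX A) :
    IsNDRPairOver
      (⟨fun z : {z : X × C // πX z.1 = γ z.2} => πX z.1.1,
        (map_continuous πX).comp (continuous_fst.comp continuous_subtype_val)⟩ :
        C({z : X × C // πX z.1 = γ z.2}, B))
      {z : {z : X × C // πX z.1 = γ z.2} | z.1.1 ∈ A} := by
  obtain ⟨u, h, hu2, hπ, hA0, h0, hstat, h1⟩ := hA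
  refine ⟨⟨fun z => u z.1.1,
      (map_continuous u).comp (continuous_fst.comp continuous_subtype_val)⟩,
    ⟨fun p => ⟨(h (p.1.1.1, p.2), p.1.1.2), by rw [hπ]; exact p.1.2⟩, ?_⟩,
    fun z => hu2 z.1.1, fun z t => hπ z.1.1 t, ?_, ?_, ?_, ?_⟩
  · apply Continuous.subtype_mk
    exact ((map_continuous h).comp
      (((continuous_fst.comp continuous_subtype_val).comp continuous_fst).prodMk
        continuous_snd)).prodMk
      ((continuous_snd.comp continuous_subtype_val).comp continuous_fst)
  · ext z
    simp only [Set.mem_setOf_eq, hA0]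
    exact Iff.rfl
  · intro z
    apply Subtype.ext
    exact Prod.ext (h0 z.1.1) rfl
  · intro a ha t
    apply Subtype.ext
    exact Prod.ext (hstat a.1.1 ha t) rfl
  · intro z hz
    exact h1 z.1.1 hz
end

section
/- For a functor f : X → Y of small categories, the diagonal of the bisimplicial set D(f) with D(f)_{p,q} = N(Y^op)_p ×_{Y₀} Y₁ ×_{Y₀} N(X)_q (with the twisted face maps d₀ in each direction given by composition with the connecting arrow η) is isomorphic to the nerve of the category S(f), the strict pullback of cod^♮ : ♮Y → Y along f. -/
open CategoryTheory Opposite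

/-- The category `S(f)`: the strict pullback of `cod^♮ : ♮Y → Y` (the twisted arrow category
of `Y` mapping to `Y` by the codomain) along `f : X → Y`, described concretely: objects are
pairs of an object `mid` of `X` and a morphism `hom : left ⟶ f(mid)` in `Y`; a morphism
`(a, x, g) → (a', x', g')` is a pair `k : a' → a`, `h : x → x'` with `f(h) ∘ g ∘ k = g'`. -/
structure SCat {X Y : Type} [SmallCategory X] [SmallCategory Y] (f : X ⥤ Y) : Type where
  left : Y
  mid : X
  hom : left ⟶ f.obj mid

namespace SCat

variable {X Y : Type} [SmallCategory X] [SmallCategory Y] {f : X ⥤ Y}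

@[ext]
structure Hom (g g' : SCat f) : Type where
  k : g'.left ⟶ g.left
  h : g.mid ⟶ g'.mid
  w : k ≫ g.hom ≫ f.map h = g'.hom := by aesop_cat

instance : Category (SCat f) where
  Hom := Hom
  id g := { k := 𝟙 g.left, h := 𝟙 g.mid }
  comp f₁ f₂ :=
    { k := f₂.k ≫ f₁.k
      h := f₁.h ≫ f₂.h
      w := by rw [← f₂.w, ← f₁.w]; simp }
  id_comp f := Hom.ext (by simp) (by simp)
  comp_id f := Hom.ext (by simp) (by simp)
  assoc f g h := Hom.ext (by simp) (by simp)

end SCat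

/-- The set of `(p, q)`-simplices of the bisimplicial set `D(f)`:
`D(f)_{p,q} = N(Yᵒᵖ)_p ×_{Y₀} Y₁ ×_{Y₀} N(X)_q`, i.e. chains
`y_p → ⋯ → y_0`, an arrow `η : y_0 → f(x_0)`, and a chain `x_0 → ⋯ → x_q`. -/
def DS {X Y : Type} [SmallCategory X] [SmallCategory Y] (f : X ⥤ Y) (p q : ℕ) : Type :=
  Σ' (F : ComposableArrows Yᵒᵖ p) (G : ComposableArrows X q),
    (F.obj 0).unop ⟶ f.obj (G.obj 0)

namespace SCat

variable {X Y : Type} [SmallCategory X] [SmallCategory Y] {f : X ⥤ Y}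

@[simp] lemma id_k (s : SCat f) : (𝟙 s : s ⟶ s).k = 𝟙 s.left := rfl
@[simp] lemma id_h (s : SCat f) : (𝟙 s : s ⟶ s).h = 𝟙 s.mid := rfl
@[simp] lemma comp_k {a b c : SCat f} (φ : a ⟶ b) (ψ : b ⟶ c) :
    (φ ≫ ψ).k = ψ.k ≫ φ.k := rfl
@[simp] lemma comp_h {a b c : SCat f} (φ : a ⟶ b) (ψ : b ⟶ c) :
    (φ ≫ ψ).h = φ.h ≫ ψ.h := rfl

end SCat

section Aux

variable {X Y : Type} [SmallCategory X] [SmallCategory Y] (f : X ⥤ Y)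

/-- auxiliary: the set of simplices of D(f) at a pair of simplex categories -/
def DObj (pq : SimplexCategoryᵒᵖ × SimplexCategoryᵒᵖ) : Type :=
  Σ' (F : ComposableArrows Yᵒᵖ pq.1.unop.len) (G : ComposableArrows X pq.2.unop.len),
    (F.obj 0).unop ⟶ f.obj (G.obj 0)

variable {f}

lemma DObj.mk_congr {pq : SimplexCategoryᵒᵖ × SimplexCategoryᵒᵖ}
    {F : ComposableArrows Yᵒᵖ pq.1.unop.len} {G : ComposableArrows X pq.2.unop.len}
    {η η' : (F.obj 0).unop ⟶ f.obj (G.obj 0)} (h : η = η') :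
    (⟨F, G, η⟩ : DObj f pq) = ⟨F, G, η'⟩ := by rw [h]

lemma third_eq {p q : ℕ} (F : ComposableArrows Yᵒᵖ p) (G : ComposableArrows X q)
    (η : (F.obj 0).unop ⟶ f.obj (G.obj 0)) {i i' : Fin (p+1)} {j j' : Fin (q+1)}
    {u₁ : (0 : Fin (p+1)) ⟶ i} {u₂ : i ⟶ i'} {u : (0 : Fin (p+1)) ⟶ i'}
    {v₁ : (0 : Fin (q+1)) ⟶ j} {v₂ : j ⟶ j'} {v : (0 : Fin (q+1)) ⟶ j'} :
    (F.map u).unop ≫ η ≫ f.map (G.map v) =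
      (F.map u₂).unop ≫ ((F.map u₁).unop ≫ η ≫ f.map (G.map v₁)) ≫ f.map (G.map v₂) := by
  rw [Subsingleton.elim u (u₁ ≫ u₂), Subsingleton.elim v (v₁ ≫ v₂)]
  simp

lemma heq_cond12 {p q : ℕ} (F : ComposableArrows Yᵒᵖ p) (G : ComposableArrows X q)
    (η : (F.obj 0).unop ⟶ f.obj (G.obj 0)) {i : Fin (p+1)} {j : Fin (q+1)}
    (hi : i = 0) (hj : j = 0) (u : (0 : Fin (p+1)) ⟶ i) (v : (0 : Fin (q+1)) ⟶ j) :
    HEq ((F.map u).unop ≫ η ≫ f.map (G.map v)) η := by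
  subst hi; subst hj
  rw [Subsingleton.elim u (𝟙 _), Subsingleton.elim v (𝟙 _)]
  simp

lemma heq_cond3 {p q : ℕ} (F : ComposableArrows Yᵒᵖ p) (G : ComposableArrows X q)
    (η : (F.obj 0).unop ⟶ f.obj (G.obj 0)) {i : Fin (p+1)} {j j' : Fin (q+1)}
    (hi : i = 0) (hj : j = j') (u : (0 : Fin (p+1)) ⟶ i) (v : (0 : Fin (q+1)) ⟶ j)
    (v' : (0 : Fin (q+1)) ⟶ j') :
    HEq ((F.map u).unop ≫ η ≫ f.map (G.map v)) (η ≫ f.map (G.map v')) := by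
  subst hi; subst hj
  rw [Subsingleton.elim u (𝟙 _), Subsingleton.elim v v']
  simp

lemma heq_cond4 {p q : ℕ} (F : ComposableArrows Yᵒᵖ p) (G : ComposableArrows X q)
    (η : (F.obj 0).unop ⟶ f.obj (G.obj 0)) {i i' : Fin (p+1)} {j : Fin (q+1)}
    (hi : i = i') (hj : j = 0) (u : (0 : Fin (p+1)) ⟶ i) (u' : (0 : Fin (p+1)) ⟶ i')
    (v : (0 : Fin (q+1)) ⟶ j) :
    HEq ((F.map u).unop ≫ η ≫ f.map (G.map v)) ((F.map u').unop ≫ η) := by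
  subst hi; subst hj
  rw [Subsingleton.elim u u', Subsingleton.elim v (𝟙 _)]
  simp

variable (f)

/-- the bisimplicial set D(f) -/
def DFun : SimplexCategoryᵒᵖ × SimplexCategoryᵒᵖ ⥤ Type where
  obj pq := DObj f pq
  map {a b} φ := TypeCat.ofHom fun w =>
    ⟨(nerve Yᵒᵖ).map φ.1 w.1, (nerve X).map φ.2 w.2.1,
      (w.1.map (homOfLE (Fin.zero_le
          ((SimplexCategory.toCat.map φ.1.unop).toFunctor.obj (0 : Fin (b.1.unop.len + 1)))))).unop ≫
        w.2.2 ≫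
        f.map (w.2.1.map (homOfLE (Fin.zero_le
          ((SimplexCategory.toCat.map φ.2.unop).toFunctor.obj (0 : Fin (b.2.unop.len + 1))))))⟩
  map_id a := by
    ext w
    obtain ⟨F, G, η⟩ := w
    exact DObj.mk_congr (by
      show (F.map (𝟙 _)).unop ≫ η ≫ f.map (G.map (𝟙 _)) = η
      simp)
  map_comp {a b c} φ ψ := by
    ext w
    obtain ⟨F, G, η⟩ := w
    exact DObj.mk_congr (third_eq F G η)

/-- projection to `Yᵒᵖ` -/
def P₁ : SCat f ⥤ Yᵒᵖ where
  obj s := op s.left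
  map φ := φ.k.op
  map_id _ := rfl
  map_comp _ _ := rfl

/-- projection to `X` -/
def P₂ : SCat f ⥤ X where
  obj s := s.mid
  map φ := φ.h
  map_id _ := rfl
  map_comp _ _ := rfl

/-- the chain in `S(f)` built from a triple -/
def Hfun {n : ℕ} (F : ComposableArrows Yᵒᵖ n) (G : ComposableArrows X n)
    (η : (F.obj 0).unop ⟶ f.obj (G.obj 0)) : ComposableArrows (SCat f) n where
  obj i := ⟨(F.obj i).unop, G.obj i,
    (F.map (homOfLE i.zero_le)).unop ≫ η ≫ f.map (G.map (homOfLE i.zero_le))⟩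
  map {i j} u :=
    { k := (F.map u).unop
      h := G.map u
      w := by
        dsimp only
        rw [Subsingleton.elim (homOfLE j.zero_le : (0 : Fin (n+1)) ⟶ j)
          (homOfLE i.zero_le ≫ u), F.map_comp, G.map_comp]
        simp }
  map_id i := SCat.Hom.ext (by simp) (by simp)
  map_comp u v := SCat.Hom.ext (by simp) (by simp)

variable {f}

lemma SCat.hom_ext' {s₁ s₂ t₁ t₂ : SCat f} (e₁ : s₁ = s₂) (e₂ : t₁ = t₂)
    (φ : s₁ ⟶ t₁) (ψ : s₂ ⟶ t₂) (hk : HEq φ.k ψ.k) (hh : HEq φ.h ψ.h) :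
    φ = eqToHom e₁ ≫ ψ ≫ eqToHom e₂.symm := by
  subst e₁; subst e₂
  simp only [eqToHom_refl, Category.comp_id, Category.id_comp]
  exact SCat.Hom.ext (eq_of_heq hk) (eq_of_heq hh)

variable (f)

/-- the componentwise equivalence of the diagonal with the nerve of `S(f)` -/
def eqv (n : SimplexCategoryᵒᵖ) :
    (nerve (SCat f)).obj n ≃ (Functor.diag SimplexCategoryᵒᵖ ⋙ DFun f).obj n where
  toFun H := ⟨H ⋙ P₁ f, H ⋙ P₂ f, (H.obj 0).hom⟩
  invFun w := Hfun f w.1 w.2.1 w.2.2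
  left_inv H := by
    have hobj : ∀ i, (Hfun f (H ⋙ P₁ f) (H ⋙ P₂ f) (H.obj 0).hom).obj i = H.obj i := by
      intro i
      show SCat.mk _ _
        ((H.map (homOfLE i.zero_le)).k ≫ (H.obj 0).hom ≫ f.map ((H.map (homOfLE i.zero_le)).h))
          = H.obj i
      rw [(H.map (homOfLE i.zero_le)).w]
    exact CategoryTheory.Functor.ext hobj (fun i j u => SCat.hom_ext' (hobj i) (hobj j) _ _ HEq.rfl HEq.rfl)
  right_inv w := by
    obtain ⟨F, G, η⟩ := w
    exact DObj.mk_congr (by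
      show (F.map (𝟙 _)).unop ≫ η ≫ f.map (G.map (𝟙 _)) = η
      simp)

/-- the natural isomorphism -/
def diagIso : (Functor.diag SimplexCategoryᵒᵖ ⋙ DFun f) ≅ (nerve (SCat f) : SSet) :=
  (NatIso.ofComponents (fun n => (eqv f n).toIso) (by
    intro m n u
    ext H
    exact DObj.mk_congr
      (H.map (homOfLE (Fin.zero_le
        ((SimplexCategory.toCat.map u.unop).toFunctor.obj (0 : Fin (n.unop.len + 1)))))).w.symm)).symm

end Aux

/-- For a functor `f : X → Y` of small categories, the diagonal of the
bisimplicial set `D(f)` with `D(f)_{p,q} = N(Yᵒᵖ)_p ×_{Y₀} Y₁ ×_{Y₀} N(X)_q` — whose twisted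
face maps `d₀` in each direction are given by composing the connecting arrow `η` with the
adjacent arrow of the chain, and whose remaining faces and degeneracies (equivalently, all
operators induced by vertex-`0`-preserving maps of `Δ`) come from `N(X)` and `N(Yᵒᵖ)` — is
isomorphic, as a simplicial set, to the nerve of `S(f)`, the strict pullback of
`cod^♮ : ♮Y → Y` along `f`. -/
theorem stmt_15 {X Y : Type} [SmallCategory X] [SmallCategory Y] (f : X ⥤ Y) :
    ∃ (D : SimplexCategoryᵒᵖ × SimplexCategoryᵒᵖ ⥤ Type)
      (e : ∀ p q : ℕ, D.obj (op (SimplexCategory.mk p), op (SimplexCategory.mk q)) ≃ DS f p q),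
      -- operators induced by vertex-0-preserving maps act via the nerves, leaving η alone
      (∀ (p q q' : ℕ) (α : SimplexCategory.mk q' ⟶ SimplexCategory.mk q),
        α.toOrderHom 0 = 0 →
        ∀ w, (e p q' (D.map (𝟙 (op (SimplexCategory.mk p)), α.op) w)).1 = (e p q w).1 ∧
          (e p q' (D.map (𝟙 (op (SimplexCategory.mk p)), α.op) w)).2.1 =
            (nerve X).map α.op (e p q w).2.1 ∧
          HEq (e p q' (D.map (𝟙 (op (SimplexCategory.mk p)), α.op) w)).2.2 (e p q w).2.2) ∧
      (∀ (p p' q : ℕ) (β : SimplexCategory.mk p' ⟶ SimplexCategory.mk p),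
        β.toOrderHom 0 = 0 →
        ∀ w, (e p' q (D.map (β.op, 𝟙 (op (SimplexCategory.mk q))) w)).2.1 = (e p q w).2.1 ∧
          (e p' q (D.map (β.op, 𝟙 (op (SimplexCategory.mk q))) w)).1 =
            (nerve Yᵒᵖ).map β.op (e p q w).1 ∧
          HEq (e p' q (D.map (β.op, 𝟙 (op (SimplexCategory.mk q))) w)).2.2 (e p q w).2.2) ∧
      -- the twisted horizontal d₀ composes η with (f applied to) the first arrow of the X-chain
      (∀ (p q : ℕ) (w : D.obj (op (SimplexCategory.mk p), op (SimplexCategory.mk (q + 1)))),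
        (e p q (D.map (𝟙 (op (SimplexCategory.mk p)),
            (SimplexCategory.δ (0 : Fin (q + 2))).op) w)).1 = (e p (q + 1) w).1 ∧
        (e p q (D.map (𝟙 (op (SimplexCategory.mk p)),
            (SimplexCategory.δ (0 : Fin (q + 2))).op) w)).2.1 =
          (nerve X).map (SimplexCategory.δ (0 : Fin (q + 2))).op (e p (q + 1) w).2.1 ∧
        HEq (e p q (D.map (𝟙 (op (SimplexCategory.mk p)),
            (SimplexCategory.δ (0 : Fin (q + 2))).op) w)).2.2
          ((e p (q + 1) w).2.2 ≫ f.map ((e p (q + 1) w).2.1.map' 0 1))) ∧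
      -- the twisted vertical d₀ composes η with the last arrow of the Yᵒᵖ-chain
      (∀ (p q : ℕ) (w : D.obj (op (SimplexCategory.mk (p + 1)), op (SimplexCategory.mk q))),
        (e p q (D.map ((SimplexCategory.δ (0 : Fin (p + 2))).op,
            𝟙 (op (SimplexCategory.mk q))) w)).2.1 = (e (p + 1) q w).2.1 ∧
        (e p q (D.map ((SimplexCategory.δ (0 : Fin (p + 2))).op,
            𝟙 (op (SimplexCategory.mk q))) w)).1 =
          (nerve Yᵒᵖ).map (SimplexCategory.δ (0 : Fin (p + 2))).op (e (p + 1) q w).1 ∧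
        HEq (e p q (D.map ((SimplexCategory.δ (0 : Fin (p + 2))).op,
            𝟙 (op (SimplexCategory.mk q))) w)).2.2
          (((e (p + 1) q w).1.map' 0 1).unop ≫ (e (p + 1) q w).2.2)) ∧
      -- the diagonal of D is isomorphic to the nerve of S(f)
      Nonempty ((Functor.diag SimplexCategoryᵒᵖ ⋙ D) ≅ (nerve (SCat f) : SSet)) := by
  refine ⟨DFun f, fun p q => Equiv.refl _, ?_, ?_, ?_, ?_, ⟨diagIso f⟩⟩
  · intro p q q' α h w
    obtain ⟨F, G, η⟩ := w
    exact ⟨rfl, rfl, heq_cond12 F G η rfl h _ _⟩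
  · intro p p' q β h w
    obtain ⟨F, G, η⟩ := w
    exact ⟨rfl, rfl, heq_cond12 F G η h rfl _ _⟩
  · intro p q w
    obtain ⟨F, G, η⟩ := w
    have hδ : (SimplexCategory.δ (0 : Fin (q + 2))).toOrderHom (0 : Fin (q + 1)) =
        (⟨1, by omega⟩ : Fin (q + 2)) := by
      ext
      simp [SimplexCategory.δ, Fin.succAbove]
    exact ⟨rfl, rfl, heq_cond3 F G η rfl hδ _ _ _⟩
  · intro p q w
    obtain ⟨F, G, η⟩ := w
    have hδ : (SimplexCategory.δ (0 : Fin (p + 2))).toOrderHom (0 : Fin (p + 1)) =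
        (⟨1, by omega⟩ : Fin (p + 2)) := by
      ext
      simp [SimplexCategory.δ, Fin.succAbove]
    exact ⟨rfl, rfl, heq_cond4 F G η hδ rfl _ _ _⟩
end
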